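/- Let D=(E,𝓕) and D̃=(Ẽ,𝓕̃) be delta-matroids with E∩Ẽ=∅. Then the twist polynomial of the direct sum D⊕D̃ equals the product of the twist polynomials of D and D̃; equivalently, for every natural number k, the number of subsets A⊆E∪Ẽ with w((D⊕D̃)*A)=k equals Σ_{i+j=k} (number of B⊆E with w(D*B)=i)·(number of B̃⊆Ẽ with w(D̃*B̃)=j). -/

import Mathlib

open Finset
open scoped symmDiff

noncomputable section

namespace DeltaMatroid

variable {α : Type*} [DecidableEq α]

/-- A delta-matroid on ground set `E` with feasible sets `F`: `F` is nonempty, consists of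
subsets of `E`, and satisfies the symmetric exchange axiom. -/
def IsDeltaMatroid (E : Finset α) (F : Finset (Finset α)) : Prop :=
  F.Nonempty ∧ (∀ X ∈ F, X ⊆ E) ∧
    ∀ X ∈ F, ∀ Y ∈ F, ∀ u ∈ X ∆ Y, ∃ v ∈ X ∆ Y, X ∆ ({u, v} : Finset α) ∈ F

/-- The twist `D * A` of the feasible sets by a subset `A`. -/
def twist (F : Finset (Finset α)) (A : Finset α) : Finset (Finset α) :=
  F.image fun X => A ∆ X

/-- Maximum cardinality of a feasible set. -/
def maxCard (F : Finset (Finset α)) : ℕ := F.sup Finset.card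

/-- Minimum cardinality of a feasible set. -/
def minCard (F : Finset (Finset α)) : ℕ := sInf (Finset.card '' (F : Set (Finset α)))

/-- The width `w(D)`. -/
def width (F : Finset (Finset α)) : ℕ := maxCard F - minCard F

/-- Feasible sets of minimum cardinality. -/
def Fmin (F : Finset (Finset α)) : Finset (Finset α) := F.filter fun X => X.card = minCard F

/-- Feasible sets of maximum cardinality. -/
def Fmax (F : Finset (Finset α)) : Finset (Finset α) := F.filter fun X => X.card = maxCard F

/-- `e` is a ribbon loop: it lies in no minimum-cardinality feasible set. -/
def IsRibbonLoop (F : Finset (Finset α)) (e : α) : Prop := ∀ X ∈ Fmin F, e ∉ X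

/-- A ribbon loop is non-orientable if it is also a ribbon loop of `D * e`. -/
def IsNonorientableRibbonLoop (F : Finset (Finset α)) (e : α) : Prop :=
  IsRibbonLoop F e ∧ IsRibbonLoop (twist F {e}) e

/-- A ribbon loop is orientable if it is not a ribbon loop of `D * e`. -/
def IsOrientableRibbonLoop (F : Finset (Finset α)) (e : α) : Prop :=
  IsRibbonLoop F e ∧ ¬ IsRibbonLoop (twist F {e}) e

/-- `e` is a loop: it lies in no feasible set. -/
def IsLoop (F : Finset (Finset α)) (e : α) : Prop := ∀ X ∈ F, e ∉ X

/-- `e` is a coloop: it lies in every feasible set. -/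
def IsColoop (F : Finset (Finset α)) (e : α) : Prop := ∀ X ∈ F, e ∈ X

/-- Contraction `D / e`. -/
def contract (F : Finset (Finset α)) (e : α) : Finset (Finset α) :=
  if ∀ X ∈ F, e ∉ X then F
  else (F.filter fun X => e ∈ X).image fun X => X.erase e

/-- Deletion `D \ e`. -/
def delete (F : Finset (Finset α)) (e : α) : Finset (Finset α) :=
  if ∀ X ∈ F, e ∈ X then F.image fun X => X.erase e
  else F.filter fun X => e ∉ X

/-- Deletion of every element of `A` (in some order; the order does not matter). -/
def deleteSet (F : Finset (Finset α)) (A : Finset α) : Finset (Finset α) :=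
  A.toList.foldl delete F

/-- The restriction `D |_A = D \ (E \ A)` of a delta-matroid with ground set `E`. -/
def restrict (F : Finset (Finset α)) (E A : Finset α) : Finset (Finset α) :=
  deleteSet F (E \ A)

/-- Feasible sets of the direct sum `D ⊕ D'`. -/
def directSum (F G : Finset (Finset α)) : Finset (Finset α) :=
  (F ×ˢ G).image fun p => p.1 ∪ p.2

/-- A delta-matroid is connected if it is not a direct sum of two delta-matroids on
nonempty ground sets. -/
def IsConnected (E : Finset α) (F : Finset (Finset α)) : Prop :=
  ¬ ∃ (E₁ E₂ : Finset α) (F₁ F₂ : Finset (Finset α)),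
      E₁.Nonempty ∧ E₂.Nonempty ∧ Disjoint E₁ E₂ ∧ E = E₁ ∪ E₂ ∧
      IsDeltaMatroid E₁ F₁ ∧ IsDeltaMatroid E₂ F₂ ∧ F = directSum F₁ F₂

/-- A delta-matroid is even if all feasible sets have the same parity of cardinality. -/
def IsEvenDM (F : Finset (Finset α)) : Prop :=
  ∀ X ∈ F, ∀ Y ∈ F, X.card % 2 = Y.card % 2

variable {ι : Type*} [Fintype ι] [DecidableEq ι]

/-- The feasible sets of `D(C)`: subsets `A` whose principal submatrix `C[A]` is nonsingular
(over `GF(2)`, i.e. has nonzero determinant); `C[∅]` is nonsingular by convention. -/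
def binaryFeasible (C : Matrix ι ι (ZMod 2)) : Finset (Finset ι) :=
  Finset.univ.filter fun A =>
    (C.submatrix (fun x : {a // a ∈ A} => (x : ι)) (fun x : {a // a ∈ A} => (x : ι))).det ≠ 0

/-- The (simple-graph part of the) intersection graph `G_D` of a normal binary delta-matroid
`D(C)`: distinct `u, v` adjacent iff `C u v = 1`.  Loops are recorded by the diagonal of `C`. -/
def interGraph (C : Matrix ι ι (ZMod 2)) : SimpleGraph ι :=
  SimpleGraph.fromRel fun u v => C u v = 1



set_option linter.unusedSectionVars false

section Aux

variable {β : Type*} [DecidableEq β]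

lemma aux_symmDiff_union {E E' A X Y : Finset α} (hX : X ⊆ E) (hY : Y ⊆ E')
    (hdisj : Disjoint E E') (hA : A ⊆ E ∪ E') :
    A ∆ (X ∪ Y) = ((A ∩ E) ∆ X) ∪ ((A ∩ E') ∆ Y) := by
  ext a
  have h1 : a ∈ X → a ∈ E := fun h => hX h
  have h2 : a ∈ Y → a ∈ E' := fun h => hY h
  have h3 : a ∈ A → a ∈ E ∨ a ∈ E' := fun h => Finset.mem_union.mp (hA h)
  have h4 : a ∈ E → a ∉ E' := fun h => Finset.disjoint_left.mp hdisj h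
  simp only [Finset.mem_symmDiff, Finset.mem_union, Finset.mem_inter]
  tauto

lemma twist_subsets {F : Finset (Finset α)} {E : Finset α} (h : ∀ X ∈ F, X ⊆ E)
    {A : Finset α} (hA : A ⊆ E) : ∀ X ∈ twist F A, X ⊆ E := by
  intro X hX
  simp only [twist, Finset.mem_image] at hX
  obtain ⟨Y, hY, rfl⟩ := hX
  exact le_trans symmDiff_le_sup (Finset.union_subset hA (h Y hY))

lemma twist_directSum {E E' : Finset α} {F F' : Finset (Finset α)}
    (hF : ∀ X ∈ F, X ⊆ E) (hF' : ∀ X ∈ F', X ⊆ E') (hdisj : Disjoint E E')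
    {A : Finset α} (hA : A ⊆ E ∪ E') :
    twist (directSum F F') A = directSum (twist F (A ∩ E)) (twist F' (A ∩ E')) := by
  ext Z
  simp only [twist, directSum, Finset.mem_image, Finset.mem_product, Prod.exists]
  constructor
  · rintro ⟨W, ⟨X, Y, ⟨hX, hY⟩, rfl⟩, rfl⟩
    exact ⟨(A ∩ E) ∆ X, (A ∩ E') ∆ Y, ⟨⟨X, hX, rfl⟩, ⟨Y, hY, rfl⟩⟩,
      (aux_symmDiff_union (hF X hX) (hF' Y hY) hdisj hA).symm⟩
  · rintro ⟨U, V, ⟨⟨X, hX, rfl⟩, ⟨Y, hY, rfl⟩⟩, rfl⟩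
    exact ⟨X ∪ Y, ⟨X, Y, ⟨hX, hY⟩, rfl⟩,
      aux_symmDiff_union (hF X hX) (hF' Y hY) hdisj hA⟩

lemma exists_minCard {F : Finset (Finset α)} (h : F.Nonempty) :
    ∃ X ∈ F, X.card = minCard F := by
  have hne : (Finset.card '' (F : Set (Finset α))).Nonempty := by
    obtain ⟨X, hX⟩ := h
    exact ⟨X.card, ⟨X, hX, rfl⟩⟩
  obtain ⟨X, hX, hc⟩ := Nat.sInf_mem hne
  exact ⟨X, hX, hc⟩

lemma minCard_le {F : Finset (Finset α)} {X : Finset α} (hX : X ∈ F) :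
    minCard F ≤ X.card :=
  Nat.sInf_le ⟨X, hX, rfl⟩

lemma exists_maxCard {F : Finset (Finset α)} (h : F.Nonempty) :
    ∃ X ∈ F, X.card = maxCard F := by
  obtain ⟨X, hX, hc⟩ := Finset.exists_mem_eq_sup F h Finset.card
  exact ⟨X, hX, hc.symm⟩

lemma le_maxCard {F : Finset (Finset α)} {X : Finset α} (hX : X ∈ F) :
    X.card ≤ maxCard F :=
  Finset.le_sup hX

lemma mem_directSum {F F' : Finset (Finset α)} {Z : Finset α} :
    Z ∈ directSum F F' ↔ ∃ X ∈ F, ∃ Y ∈ F', Z = X ∪ Y := by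
  simp only [directSum, Finset.mem_image, Finset.mem_product, Prod.exists]
  constructor
  · rintro ⟨X, Y, ⟨hX, hY⟩, rfl⟩; exact ⟨X, hX, Y, hY, rfl⟩
  · rintro ⟨X, hX, Y, hY, rfl⟩; exact ⟨X, Y, ⟨hX, hY⟩, rfl⟩

lemma directSum_nonempty {F F' : Finset (Finset α)} (h : F.Nonempty) (h' : F'.Nonempty) :
    (directSum F F').Nonempty := by
  obtain ⟨X, hX⟩ := h
  obtain ⟨Y, hY⟩ := h'
  exact ⟨X ∪ Y, mem_directSum.mpr ⟨X, hX, Y, hY, rfl⟩⟩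

lemma width_directSum {E E' : Finset α} {F F' : Finset (Finset α)}
    (hFne : F.Nonempty) (hF'ne : F'.Nonempty)
    (hF : ∀ X ∈ F, X ⊆ E) (hF' : ∀ X ∈ F', X ⊆ E') (hdisj : Disjoint E E') :
    width (directSum F F') = width F + width F' := by
  have hcard : ∀ X ∈ F, ∀ Y ∈ F', (X ∪ Y).card = X.card + Y.card := by
    intro X hX Y hY
    exact Finset.card_union_of_disjoint (hdisj.mono (hF X hX) (hF' Y hY))
  have hmax : maxCard (directSum F F') = maxCard F + maxCard F' := by
    apply le_antisymm
    · apply Finset.sup_le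
      intro Z hZ
      obtain ⟨X, hX, Y, hY, rfl⟩ := mem_directSum.mp hZ
      rw [hcard X hX Y hY]
      exact Nat.add_le_add (le_maxCard hX) (le_maxCard hY)
    · obtain ⟨X, hX, hXc⟩ := exists_maxCard hFne
      obtain ⟨Y, hY, hYc⟩ := exists_maxCard hF'ne
      have : X ∪ Y ∈ directSum F F' := mem_directSum.mpr ⟨X, hX, Y, hY, rfl⟩
      calc maxCard F + maxCard F' = (X ∪ Y).card := by rw [hcard X hX Y hY, hXc, hYc]
        _ ≤ maxCard (directSum F F') := le_maxCard this
  have hmin : minCard (directSum F F') = minCard F + minCard F' := by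
    apply le_antisymm
    · obtain ⟨X, hX, hXc⟩ := exists_minCard hFne
      obtain ⟨Y, hY, hYc⟩ := exists_minCard hF'ne
      have : X ∪ Y ∈ directSum F F' := mem_directSum.mpr ⟨X, hX, Y, hY, rfl⟩
      calc minCard (directSum F F') ≤ (X ∪ Y).card := minCard_le this
        _ = minCard F + minCard F' := by rw [hcard X hX Y hY, hXc, hYc]
    · obtain ⟨Z, hZ, hZc⟩ := exists_minCard (directSum_nonempty hFne hF'ne)
      obtain ⟨X, hX, Y, hY, rfl⟩ := mem_directSum.mp hZ
      rw [← hZc, hcard X hX Y hY]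
      exact Nat.add_le_add (minCard_le hX) (minCard_le hY)
  have h1 : minCard F ≤ maxCard F := by
    obtain ⟨X, hX, hXc⟩ := exists_minCard hFne
    rw [← hXc]; exact le_maxCard hX
  have h2 : minCard F' ≤ maxCard F' := by
    obtain ⟨X, hX, hXc⟩ := exists_minCard hF'ne
    rw [← hXc]; exact le_maxCard hX
  unfold width
  rw [hmax, hmin]
  omega


lemma conv_count {P Q : Finset β} (f g : β → ℕ) (k : ℕ) :
    ((P ×ˢ Q).filter fun p => f p.1 + g p.2 = k).card =
      ∑ p ∈ Finset.HasAntidiagonal.antidiagonal k,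
        (P.filter fun b => f b = p.1).card * (Q.filter fun b => g b = p.2).card := by
  classical
  have heq : ((P ×ˢ Q).filter fun p => f p.1 + g p.2 = k) =
      (Finset.HasAntidiagonal.antidiagonal k).biUnion fun ij =>
        (P.filter fun b => f b = ij.1) ×ˢ (Q.filter fun b => g b = ij.2) := by
    ext p
    simp only [Finset.mem_filter, Finset.mem_product, Finset.mem_biUnion,
      Finset.HasAntidiagonal.mem_antidiagonal, Prod.exists]
    constructor
    · rintro ⟨⟨h1, h2⟩, h3⟩
      exact ⟨f p.1, g p.2, h3, ⟨h1, rfl⟩, ⟨h2, rfl⟩⟩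
    · rintro ⟨i, j, hk, ⟨h1, hi⟩, ⟨h2, hj⟩⟩
      exact ⟨⟨h1, h2⟩, by rw [hi, hj]; exact hk⟩
  rw [heq, Finset.card_biUnion]
  · exact Finset.sum_congr rfl fun ij _ => Finset.card_product _ _
  · rintro ⟨i, j⟩ hij ⟨i', j'⟩ hij' hne
    simp only [Finset.disjoint_left]
    rintro p hp hp'
    simp only [Finset.mem_product, Finset.mem_filter] at hp hp'
    exact hne (by ext <;> simp <;> omega)

lemma union_inter_left {E E' B B' : Finset α} (hB : B ⊆ E) (hB' : B' ⊆ E')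
    (hdisj : Disjoint E E') : (B ∪ B') ∩ E = B := by
  ext a
  have h1 : a ∈ B → a ∈ E := fun h => hB h
  have h2 : a ∈ B' → a ∉ E := fun h => Finset.disjoint_right.mp hdisj (hB' h)
  simp only [Finset.mem_inter, Finset.mem_union]
  tauto

lemma width_twist_key {E E' : Finset α} {F F' : Finset (Finset α)}
    (hFne : F.Nonempty) (hF'ne : F'.Nonempty)
    (hF : ∀ X ∈ F, X ⊆ E) (hF' : ∀ X ∈ F', X ⊆ E') (hdisj : Disjoint E E')
    {A : Finset α} (hA : A ⊆ E ∪ E') :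
    width (twist (directSum F F') A) =
      width (twist F (A ∩ E)) + width (twist F' (A ∩ E')) := by
  rw [twist_directSum hF hF' hdisj hA]
  exact width_directSum (hFne.image _) (hF'ne.image _)
    (twist_subsets hF Finset.inter_subset_right)
    (twist_subsets hF' Finset.inter_subset_right) hdisj

end Aux

/-- The twist polynomial of a direct sum is the product of the twist polynomials: the `k`-th
coefficient of `∂w_{D ⊕ D'}` is the convolution of the coefficients of `∂w_D` and `∂w_{D'}`. -/
theorem twistPolynomial_directSum (E E' : Finset α) (F F' : Finset (Finset α))
    (hD : IsDeltaMatroid E F) (hD' : IsDeltaMatroid E' F') (hdisj : Disjoint E E') :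
    ∀ k : ℕ,
      ((E ∪ E').powerset.filter fun A => width (twist (directSum F F') A) = k).card =
        ∑ p ∈ Finset.HasAntidiagonal.antidiagonal k,
          (E.powerset.filter fun B => width (twist F B) = p.1).card *
          (E'.powerset.filter fun B => width (twist F' B) = p.2).card := by
  intro k
  classical
  obtain ⟨hFne, hFE, -⟩ := hD
  obtain ⟨hGne, hGE, -⟩ := hD'
  rw [← conv_count (fun B => width (twist F B)) (fun B => width (twist F' B)) k]
  apply Finset.card_bij (fun A _ => (A ∩ E, A ∩ E'))
  · intro A hA
    simp only [Finset.mem_filter, Finset.mem_powerset] at hA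
    obtain ⟨hAsub, hAw⟩ := hA
    simp only [Finset.mem_filter, Finset.mem_product, Finset.mem_powerset]
    exact ⟨⟨Finset.inter_subset_right, Finset.inter_subset_right⟩,
      by rw [← width_twist_key hFne hGne hFE hGE hdisj hAsub]; exact hAw⟩
  · intro A hA A' hA' h
    simp only [Finset.mem_filter, Finset.mem_powerset] at hA hA'
    have h1 : A ∩ E = A' ∩ E := congrArg Prod.fst h
    have h2 : A ∩ E' = A' ∩ E' := congrArg Prod.snd h
    have e1 : A = (A ∩ E) ∪ (A ∩ E') := by
      rw [← Finset.inter_union_distrib_left, Finset.inter_eq_left.mpr hA.1]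
    have e2 : A' = (A' ∩ E) ∪ (A' ∩ E') := by
      rw [← Finset.inter_union_distrib_left, Finset.inter_eq_left.mpr hA'.1]
    rw [e1, e2, h1, h2]
  · rintro ⟨B, B'⟩ hp
    simp only [Finset.mem_filter, Finset.mem_product, Finset.mem_powerset] at hp
    obtain ⟨⟨hB, hB'⟩, hw⟩ := hp
    have hsub : B ∪ B' ⊆ E ∪ E' := Finset.union_subset_union hB hB'
    have hiE : (B ∪ B') ∩ E = B := union_inter_left hB hB' hdisj
    have hiE' : (B ∪ B') ∩ E' = B' := by
      rw [Finset.union_comm]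
      exact union_inter_left hB' hB hdisj.symm
    refine ⟨B ∪ B', ?_, ?_⟩
    · simp only [Finset.mem_filter, Finset.mem_powerset]
      refine ⟨hsub, ?_⟩
      rw [width_twist_key hFne hGne hFE hGE hdisj hsub, hiE, hiE']
      exact hw
    · rw [hiE, hiE']


end DeltaMatroid

end
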